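/- Let K be a number field of degree k over ℚ with ring of integers O_K and fixed integral basis ω_1, ..., ω_k. For β = b_1ω_1 + ... + b_kω_k with integers |b_j| ≤ B and N_{K/ℚ}(β) = b ≠ 0, the number of units ε of O_K such that εβ = b'_1ω_1 + ... + b'_kω_k with all |b'_j| ≤ B is at most O_ε(B^ε) for every ε > 0 (implied constant depending on K, the ω_j, and ε). -/

import Mathlib

open NumberField NumberField.Units NumberField.InfinitePlace NumberField.Units.dirichletUnitTheorem Module
open scoped Classical

lemma aux_card_le_mul {α β : Type*} (S : Set α) (f : α → β) (n : ℕ)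
    (h : ∀ y : β, Nat.card {x : α | x ∈ S ∧ f x = y} ≤ n) :
    Nat.card S ≤ n * Nat.card (f '' S) := by
  classical
  rcases S.finite_or_infinite with hS | hS
  · let s := hS.toFinset
    have hs : ∀ {x}, x ∈ s ↔ x ∈ S := hS.mem_toFinset
    have key : s.card ≤ n * (s.image f).card := by
      apply Finset.card_le_mul_card_image
      intro y hy
      have heq : {x : α | x ∈ S ∧ f x = y} = ↑(s.filter fun x => f x = y) := by
        ext x; simp [hs]
      calc (s.filter fun x => f x = y).card
          = Nat.card {x : α | x ∈ S ∧ f x = y} := by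
            rw [Nat.card_coe_set_eq, heq, Set.ncard_coe_finset]
        _ ≤ n := h y
    have h1 : Nat.card S = s.card := by
      rw [Nat.card_coe_set_eq, ← Set.ncard_coe_finset]
      congr 1; ext x; simp [hs]
    have h2 : Nat.card (f '' S) = (s.image f).card := by
      rw [Nat.card_coe_set_eq, ← Set.ncard_coe_finset]
      congr 1; ext x; simp [hs]
    rw [h1, h2]; exact key
  · rw [Nat.card_coe_set_eq, hS.ncard]; exact Nat.zero_le _

lemma aux_count (K : Type*) [Field K] [NumberField K] :
    ∃ c : ℝ, 0 < c ∧ ∀ R : ℝ, 0 ≤ R → ∀ S : Set (𝓞 K)ˣ,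
      (∀ u ∈ S, ‖logEmbedding K (Additive.ofMul u)‖ ≤ R) →
      (Nat.card S : ℝ) ≤
        (Nat.card (torsion K)) * (2 * c * R + 3) ^ (rank K) := by
  classical
  let bR : Basis (Fin (rank K)) ℝ ({w : InfinitePlace K // w ≠ w₀} → ℝ) :=
    (basisUnitLattice K).ofZLatticeBasis ℝ (unitLattice K)
  let g : Fin (rank K) → ({w : InfinitePlace K // w ≠ w₀} → ℝ) →L[ℝ] ℝ :=
    fun i => LinearMap.toContinuousLinearMap (bR.coord i)
  set c : ℝ := 1 + ∑ i, ‖g i‖ with hc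
  have hc0 : 0 < c := by positivity
  have hci : ∀ i, ‖g i‖ ≤ c := by
    intro i
    have h1 : ‖g i‖ ≤ ∑ j, ‖g j‖ :=
      Finset.single_le_sum (f := fun j => ‖g j‖) (fun j _ => norm_nonneg _) (Finset.mem_univ i)
    linarith
  refine ⟨c, hc0, fun R hR S hSR => ?_⟩
  have hmem : ∀ u : (𝓞 K)ˣ, logEmbedding K (Additive.ofMul u) ∈ unitLattice K :=
    fun u => ⟨Additive.ofMul u, trivial, rfl⟩
  set M : ℤ := ⌈c * R⌉ with hM
  have hM0 : 0 ≤ M := Int.ceil_nonneg (by positivity)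
  let f : (𝓞 K)ˣ → (Fin (rank K) → ℤ) := fun u i =>
    (basisUnitLattice K).repr ⟨logEmbedding K (Additive.ofMul u), hmem u⟩ i
  -- fiber bound
  have hfib : ∀ y, Nat.card {u : (𝓞 K)ˣ | u ∈ S ∧ f u = y} ≤ Nat.card (torsion K) := by
    intro y
    rcases Set.eq_empty_or_nonempty {u : (𝓞 K)ˣ | u ∈ S ∧ f u = y} with he | ⟨u₀, hu₀⟩
    · simp [he]
    · have hlog : ∀ u ∈ {u : (𝓞 K)ˣ | u ∈ S ∧ f u = y},
          logEmbedding K (Additive.ofMul u) = logEmbedding K (Additive.ofMul u₀) := by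
        intro u hu
        have hrepr : (⟨logEmbedding K (Additive.ofMul u), hmem u⟩ : unitLattice K) =
            ⟨logEmbedding K (Additive.ofMul u₀), hmem u₀⟩ := by
          apply (basisUnitLattice K).repr.injective
          ext i
          exact congrFun (hu.2.trans hu₀.2.symm) i
        exact congrArg Subtype.val hrepr
      have htor : ∀ u ∈ {u : (𝓞 K)ˣ | u ∈ S ∧ f u = y}, u * u₀⁻¹ ∈ torsion K := by
        intro u hu
        rw [← logEmbedding_eq_zero_iff]
        rw [ofMul_mul, map_add, ofMul_inv, map_neg, hlog u hu, add_neg_cancel]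
      have hinj : Function.Injective
          (fun u : {u : (𝓞 K)ˣ // u ∈ S ∧ f u = y} =>
            (⟨(u : (𝓞 K)ˣ) * u₀⁻¹, htor u u.2⟩ : torsion K)) := by
        intro u v huv
        have := congrArg Subtype.val huv
        exact Subtype.ext (mul_left_injective (a := u₀⁻¹) this)
      exact Nat.card_le_card_of_injective _ hinj
  -- image is in a box
  have himg : f '' S ⊆ ↑(Finset.Icc (fun _ : Fin (rank K) => -M) (fun _ => M)) := by
    rintro _ ⟨u, hu, rfl⟩
    simp only [Finset.coe_Icc, Set.mem_Icc, Pi.le_def]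
    have key : ∀ i, |(f u i : ℝ)| ≤ c * R := by
      intro i
      have h1 : (f u i : ℝ) = bR.repr (logEmbedding K (Additive.ofMul u)) i := by
        rw [← Basis.ofZLatticeBasis_repr_apply (K := ℝ)]
      have h2 : bR.repr (logEmbedding K (Additive.ofMul u)) i
          = g i (logEmbedding K (Additive.ofMul u)) := by
        simp [g, Basis.coord_apply]
      rw [h1, h2]
      calc |g i (logEmbedding K (Additive.ofMul u))|
          ≤ ‖g i‖ * ‖logEmbedding K (Additive.ofMul u)‖ := (g i).le_opNorm _
        _ ≤ c * R := by
            exact mul_le_mul (hci i) (hSR u hu) (norm_nonneg _) (le_of_lt hc0)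
    have hbox : ∀ i, -M ≤ f u i ∧ f u i ≤ M := by
      intro i
      have h4 : |(f u i : ℝ)| ≤ (M : ℝ) := (key i).trans (Int.le_ceil _)
      rw [← Int.cast_abs, Int.cast_le] at h4
      exact abs_le.mp h4
    exact ⟨fun i => (hbox i).1, fun i => (hbox i).2⟩
  have hcard1 : Nat.card S ≤ Nat.card (torsion K) * Nat.card (f '' S) :=
    aux_card_le_mul S f _ hfib
  have hcard2 : Nat.card (f '' S) ≤ ((2 * M + 1).toNat) ^ rank K := by
    have hfin : (↑(Finset.Icc (fun _ : Fin (rank K) => -M) (fun _ => M)) :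
        Set (Fin (rank K) → ℤ)).Finite := (Finset.Icc _ _).finite_toSet
    have h5 := Set.ncard_le_ncard himg hfin
    rw [Nat.card_coe_set_eq]
    refine le_trans h5 ?_
    rw [Set.ncard_coe_finset, Pi.card_Icc]
    have h6 : ∀ i : Fin (rank K), (Finset.Icc (-M) M).card = (2 * M + 1).toNat := by
      intro i
      rw [Int.card_Icc]
      congr 1
      ring
    rw [Finset.prod_congr rfl (fun i _ => h6 i), Finset.prod_const, Finset.card_univ,
      Fintype.card_fin]
  have hMle : ((2 * M + 1).toNat : ℝ) ≤ 2 * c * R + 3 := by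
    have h8 : ((2 * M + 1).toNat : ℝ) = ((2 * M + 1 : ℤ) : ℝ) := by
      exact_mod_cast Int.toNat_of_nonneg (by omega : (0:ℤ) ≤ 2 * M + 1)
    rw [h8]
    push_cast
    have h7 : (M : ℝ) ≤ c * R + 1 := (Int.ceil_lt_add_one _).le
    linarith
  calc (Nat.card S : ℝ)
      ≤ ((Nat.card (torsion K) * ((2 * M + 1).toNat) ^ rank K : ℕ) : ℝ) := by
        exact_mod_cast le_trans hcard1 (Nat.mul_le_mul_left _ hcard2)
    _ ≤ (Nat.card (torsion K)) * (2 * c * R + 3) ^ (rank K) := by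
        push_cast
        apply mul_le_mul_of_nonneg_left _ (Nat.cast_nonneg _)
        exact pow_le_pow_left₀ (Nat.cast_nonneg _) hMle _

lemma aux_intCast (K : Type*) [Field K] [NumberField K] (w : InfinitePlace K) (c : ℤ) :
    w ((c : ℤ) : K) = |(c : ℝ)| := by
  rw [← norm_embedding_eq, map_intCast]
  simp

lemma aux_mult_le (K : Type*) [Field K] [NumberField K] (w : InfinitePlace K) :
    (mult w : ℝ) ≤ 2 := by
  rw [mult]
  split_ifs <;> norm_num

lemma aux_upper (K : Type*) [Field K] [NumberField K] (k : ℕ)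
    (ω : Basis (Fin k) ℤ (𝓞 K)) (B : ℕ)
    (A : ℝ) (hA : A = 1 + ∑ w : InfinitePlace K, ∑ j, w (ω j : K))
    (c : Fin k → ℤ) (hc : ∀ j, |c j| ≤ (B : ℤ)) (w : InfinitePlace K) :
    w ((∑ j, c j • ω j : 𝓞 K) : K) ≤ A * B := by
  have hA1 : ∀ w' : InfinitePlace K, ∑ j, w' (ω j : K) ≤ A := by
    intro w'
    rw [hA]
    have h1 : ∑ j, w' (ω j : K) ≤ ∑ w'' : InfinitePlace K, ∑ j, w'' (ω j : K) :=
by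
      apply Finset.single_le_sum (f := fun w3 : InfinitePlace K => ∑ j, w3 (ω j : K))
        (fun w3 _ => Finset.sum_nonneg fun j _ => AbsoluteValue.nonneg w3.1 _) (Finset.mem_univ w')
    linarith
  have hcoe : ((∑ j, c j • ω j : 𝓞 K) : K) = ∑ j, (c j : K) * (ω j : K) := by
    push_cast [zsmul_eq_mul]
    rfl
  rw [hcoe]
  calc w (∑ j, (c j : K) * (ω j : K)) ≤ ∑ j, w ((c j : K) * (ω j : K)) :=
        w.1.sum_le _ _
    _ = ∑ j, |(c j : ℝ)| * w (ω j : K) := by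
        refine Finset.sum_congr rfl fun j _ => ?_
        rw [map_mul, aux_intCast]
    _ ≤ ∑ j, (B : ℝ) * w (ω j : K) := by
        refine Finset.sum_le_sum fun j _ => ?_
        refine mul_le_mul_of_nonneg_right ?_ (AbsoluteValue.nonneg w.1 _)
        exact_mod_cast hc j
    _ = (B : ℝ) * ∑ j, w (ω j : K) := by rw [Finset.mul_sum]
    _ ≤ (B : ℝ) * A := mul_le_mul_of_nonneg_left (hA1 w) (Nat.cast_nonneg _)
    _ = A * B := mul_comm _ _

lemma aux_lower (K : Type*) [Field K] [NumberField K] (D : ℝ) (hD : 1 ≤ D)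
    (x : 𝓞 K) (hx : Algebra.norm ℤ x ≠ 0) (hxb : ∀ w : InfinitePlace K, w (x : K) ≤ D)
    (w : InfinitePlace K) : 1 / D ^ (Module.finrank ℚ K) ≤ w (x : K) := by
  set n := Module.finrank ℚ K with hn
  have hx0 : x ≠ 0 := by
    intro h
    rw [h] at hx
    exact hx Algebra.norm_zero
  have hx0K : (x : K) ≠ 0 := by
    simpa using hx0
  have hwpos : ∀ w' : InfinitePlace K, 0 < w' (x : K) := fun w' => pos_iff.mpr hx0K
  have hDpos : (0:ℝ) < D := lt_of_lt_of_le one_pos hD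
  have hDn : (0:ℝ) < D ^ n := pow_pos hDpos n
  have hN : (1:ℝ) ≤ ∏ w' : InfinitePlace K, w' (x : K) ^ mult w' := by
    rw [prod_eq_abs_norm]
    have h1 : (1:ℚ) ≤ |Algebra.norm ℚ (x : K)| := by
      rw [← Algebra.coe_norm_int]
      exact_mod_cast Int.one_le_abs hx
    exact_mod_cast h1
  have hsplit : ∏ w' : InfinitePlace K, w' (x : K) ^ mult w' =
      w (x : K) ^ mult w * ∏ w' ∈ Finset.univ.erase w, w' (x : K) ^ mult w' :=
    (Finset.mul_prod_erase Finset.univ _ (Finset.mem_univ w)).symm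
  have hrest : ∏ w' ∈ Finset.univ.erase w, w' (x : K) ^ mult w' ≤ D ^ n := by
    calc ∏ w' ∈ Finset.univ.erase w, w' (x : K) ^ mult w'
        ≤ ∏ w' ∈ Finset.univ.erase w, D ^ mult w' := by
          refine Finset.prod_le_prod (fun w' _ => pow_nonneg (le_of_lt (hwpos w')) _)
            (fun w' _ => pow_le_pow_left₀ (le_of_lt (hwpos w')) (hxb w') _)
      _ = D ^ (∑ w' ∈ Finset.univ.erase w, mult w') := by
          rw [Finset.prod_pow_eq_pow_sum]
      _ ≤ D ^ n := by
          refine pow_le_pow_right₀ hD ?_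
          rw [hn, ← sum_mult_eq]
          exact Finset.sum_le_sum_of_subset (Finset.subset_univ _)
  have key : 1 ≤ w (x : K) ^ mult w * D ^ n := by
    refine le_trans hN ?_
    rw [hsplit]
    exact mul_le_mul_of_nonneg_left hrest (pow_nonneg (le_of_lt (hwpos w)) _)
  have hkey2 : 1 / D ^ n ≤ w (x : K) ^ mult w := by
    rw [div_le_iff₀ hDn] at *
    linarith [key]
  rcases le_or_gt 1 (w (x : K)) with h | h
  · refine le_trans ?_ h
    rw [div_le_one hDn]
    calc (1:ℝ) = 1 ^ n := (one_pow n).symm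
      _ ≤ D ^ n := pow_le_pow_left₀ zero_le_one hD n
  · refine le_trans hkey2 ?_
    calc w (x : K) ^ mult w ≤ w (x : K) ^ 1 :=
          pow_le_pow_of_le_one (le_of_lt (hwpos w)) (le_of_lt h) mult_pos
      _ = w (x : K) := pow_one _

lemma aux_bound (K : Type*) [Field K] [NumberField K] (k : ℕ)
    (ω : Basis (Fin k) ℤ (𝓞 K))
    (A : ℝ) (hA : A = 1 + ∑ w : InfinitePlace K, ∑ j, w (ω j : K))
    (B : ℕ) (hB : 2 ≤ B) (b : Fin k → ℤ) (hb : ∀ j, |b j| ≤ (B : ℤ))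
    (hnorm : Algebra.norm ℤ (∑ j, b j • ω j) ≠ 0)
    (u : (𝓞 K)ˣ)
    (hu : ∀ j, |ω.repr ((u : 𝓞 K) * ∑ j', b j' • ω j') j| ≤ (B : ℤ)) :
    ‖logEmbedding K (Additive.ofMul u)‖ ≤
      2 * (Module.finrank ℚ K + 1) * Real.log (A * B) := by
  set n := Module.finrank ℚ K with hn
  have hA1 : 1 ≤ A := by
    rw [hA]
    have : 0 ≤ ∑ w : InfinitePlace K, ∑ j, w (ω j : K) :=
      Finset.sum_nonneg fun w _ => Finset.sum_nonneg fun j _ => AbsoluteValue.nonneg w.1 _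
    linarith
  have hB1 : (1:ℝ) ≤ (B : ℝ) := by exact_mod_cast le_trans (by norm_num) hB
  have hD : (1:ℝ) ≤ A * B := le_trans hA1 (le_mul_of_one_le_right (by linarith) hB1)
  have hDpos : (0:ℝ) < A * B := lt_of_lt_of_le one_pos hD
  have hlogD : 0 ≤ Real.log (A * B) := Real.log_nonneg hD
  set β : 𝓞 K := ∑ j, b j • ω j with hβdef
  set β' : 𝓞 K := (u : 𝓞 K) * β with hβ'def
  have hβ'norm : Algebra.norm ℤ β' ≠ 0 := by
    rw [hβ'def, map_mul]
    exact mul_ne_zero (((Units.isUnit u).map (Algebra.norm ℤ)).ne_zero) hnorm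
  have hupβ : ∀ w : InfinitePlace K, w (β : K) ≤ A * B := fun w =>
    aux_upper K k ω B A hA b hb w
  have hupβ' : ∀ w : InfinitePlace K, w (β' : K) ≤ A * B := by
    intro w
    have hrepr : β' = ∑ j, ω.repr β' j • ω j := (Basis.sum_repr ω β').symm
    calc w (β' : K) = w ((∑ j, ω.repr β' j • ω j : 𝓞 K) : K) := by rw [← hrepr]
      _ ≤ A * B := aux_upper K k ω B A hA _ hu w
  have hloβ : ∀ w : InfinitePlace K, 1 / (A*B) ^ n ≤ w (β : K) :=
    aux_lower K (A*B) hD β hnorm hupβ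
  have hloβ' : ∀ w : InfinitePlace K, 1 / (A*B) ^ n ≤ w (β' : K) :=
    aux_lower K (A*B) hD β' hβ'norm hupβ'
  have hDn : (0:ℝ) < (A*B) ^ n := pow_pos hDpos n
  have hlogpow : Real.log (1 / (A*B) ^ n) = -(n * Real.log (A*B)) := by
    rw [one_div, Real.log_inv, Real.log_pow]
  have hRnn : 0 ≤ 2 * ((n:ℝ) + 1) * Real.log (A * B) := by positivity
  rw [pi_norm_le_iff_of_nonneg hRnn]
  intro w
  have hwβpos : 0 < w.1 (β : K) := lt_of_lt_of_le (by positivity) (hloβ w.1)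
  have hwβ'pos : 0 < w.1 (β' : K) := lt_of_lt_of_le (by positivity) (hloβ' w.1)
  have hmul : w.1 (β' : K) = w.1 ((u : 𝓞 K) : K) * w.1 (β : K) := by
    rw [← map_mul]
    congr 1
  have hlogu : Real.log (w.1 ((u : 𝓞 K) : K)) =
      Real.log (w.1 (β' : K)) - Real.log (w.1 (β : K)) := by
    have h9 : w.1 ((u : 𝓞 K) : K) = w.1 (β' : K) / w.1 (β : K) := by
      field_simp [hmul]
      exact hmul.symm
    rw [h9, Real.log_div (ne_of_gt hwβ'pos) (ne_of_gt hwβpos)]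
  have hup1 : Real.log (w.1 (β' : K)) ≤ Real.log (A*B) :=
    Real.log_le_log hwβ'pos (hupβ' w.1)
  have hup2 : Real.log (w.1 (β : K)) ≤ Real.log (A*B) :=
    Real.log_le_log hwβpos (hupβ w.1)
  have hlo1 : -((n:ℝ) * Real.log (A*B)) ≤ Real.log (w.1 (β' : K)) := by
    rw [← hlogpow]
    exact Real.log_le_log (by positivity) (hloβ' w.1)
  have hlo2 : -((n:ℝ) * Real.log (A*B)) ≤ Real.log (w.1 (β : K)) := by
    rw [← hlogpow]
    exact Real.log_le_log (by positivity) (hloβ w.1)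
  have habs : |Real.log (w.1 ((u : 𝓞 K) : K))| ≤ ((n:ℝ) + 1) * Real.log (A*B) := by
    rw [hlogu, abs_le]
    constructor <;> linarith
  calc ‖logEmbedding K (Additive.ofMul u) w‖
      = |(mult w.1 : ℝ) * Real.log (w.1 ((u : 𝓞 K) : K))| := by
        rw [logEmbedding_component, Real.norm_eq_abs]
    _ = (mult w.1 : ℝ) * |Real.log (w.1 ((u : 𝓞 K) : K))| := by
        rw [abs_mul, Nat.abs_cast]
    _ ≤ 2 * (((n:ℝ) + 1) * Real.log (A*B)) :=
        mul_le_mul (aux_mult_le K w.1) habs (abs_nonneg _) (by norm_num)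
    _ = 2 * ((n:ℝ) + 1) * Real.log (A * B) := by ring

set_option maxHeartbeats 1000000

/-- For `β = ∑ bⱼωⱼ` with `|bⱼ| ≤ B` and nonzero norm, the number of units `u` of `O_K`
such that `u·β` has all coordinates of absolute value at most `B` in the integral basis
`ω` is `O_ε(B^ε)`. -/
theorem units_moving_bounded_element_count
    (K : Type*) [Field K] [NumberField K] (k : ℕ)
    (ω : Module.Basis (Fin k) ℤ (NumberField.RingOfIntegers K)) :
    ∀ ε : ℝ, 0 < ε → ∃ C : ℝ, 0 < C ∧
      ∀ B : ℕ, 2 ≤ B → ∀ b : Fin k → ℤ, (∀ j, |b j| ≤ (B : ℤ)) →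
        Algebra.norm ℤ (∑ j, b j • ω j) ≠ 0 →
        (Nat.card {u : (NumberField.RingOfIntegers K)ˣ |
            ∀ j, |ω.repr ((u : NumberField.RingOfIntegers K) * ∑ j', b j' • ω j') j| ≤ (B : ℤ)} : ℝ)
          ≤ C * (B : ℝ) ^ ε := by
  intro ε hε
  classical
  obtain ⟨c, hc0, hcount⟩ := aux_count K
  set n := Module.finrank ℚ K with hn
  set A : ℝ := 1 + ∑ w : InfinitePlace K, ∑ j, w (ω j : K) with hAdef
  have hA1 : 1 ≤ A := by
    rw [hAdef]
    have : 0 ≤ ∑ w : InfinitePlace K, ∑ j, w (ω j : K) :=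
      Finset.sum_nonneg fun w _ => Finset.sum_nonneg fun j _ => AbsoluteValue.nonneg w.1 _
    linarith
  have hlogA : 0 ≤ Real.log A := Real.log_nonneg hA1
  set r := rank K with hr
  set δ : ℝ := ε / (r + 1) with hδ
  have hδ0 : 0 < δ := by positivity
  set C1 : ℝ := 4 * c * ((n : ℝ) + 1) * (Real.log A + 1) + 3 with hC1
  have hC1pos : 0 < C1 := by positivity
  have hw0 : 0 < (Nat.card (torsion K) : ℝ) := by
    exact_mod_cast Nat.card_pos
  set C : ℝ := (Nat.card (torsion K) : ℝ) * (C1 * (1 + 1/δ)) ^ r with hC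
  have hCpos : 0 < C := by positivity
  refine ⟨C, hCpos, fun B hB b hb hnorm => ?_⟩
  have hB1 : (1:ℝ) ≤ (B : ℝ) := by exact_mod_cast le_trans (by norm_num) hB
  have hBpos : (0:ℝ) < (B : ℝ) := lt_of_lt_of_le one_pos hB1
  have hlogB : 0 ≤ Real.log B := Real.log_nonneg hB1
  set R : ℝ := 2 * ((n : ℝ) + 1) * Real.log (A * B) with hR
  have hABpos : (0:ℝ) < A * B := by positivity
  have hAB1 : (1:ℝ) ≤ A * B := le_trans hA1 (le_mul_of_one_le_right (by linarith) hB1)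
  have hR0 : 0 ≤ R := by
    rw [hR]
    have := Real.log_nonneg hAB1
    positivity
  have hmain := hcount R hR0
    {u : (𝓞 K)ˣ | ∀ j, |ω.repr ((u : 𝓞 K) * ∑ j', b j' • ω j') j| ≤ (B : ℤ)}
    (fun u hu => aux_bound K k ω A hAdef B hB b hb hnorm u hu)
  refine le_trans hmain ?_
  rw [hC]
  -- now bound (2*c*R+3)^r
  have hsplit : Real.log (A * B) = Real.log A + Real.log B :=
    Real.log_mul (by positivity) (by positivity)
  have hstep1 : 2 * c * R + 3 ≤ C1 * (1 + Real.log B) := by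
    rw [hR, hsplit, hC1]
    nlinarith [mul_nonneg (mul_nonneg hc0.le (by positivity : (0:ℝ) ≤ (n:ℝ)+1)) hlogA,
      mul_nonneg (mul_nonneg (mul_nonneg hc0.le (by positivity : (0:ℝ) ≤ (n:ℝ)+1)) hlogA) hlogB,
      mul_nonneg (mul_nonneg hc0.le (by positivity : (0:ℝ) ≤ (n:ℝ)+1)) hlogB]
  have hstep2 : 1 + Real.log B ≤ (1 + 1/δ) * (B:ℝ) ^ δ := by
    have h1 : Real.log B ≤ (B:ℝ) ^ δ / δ := Real.log_le_rpow_div (Nat.cast_nonneg _) hδ0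
    have h2 : (1:ℝ) ≤ (B:ℝ) ^ δ := Real.one_le_rpow hB1 hδ0.le
    have h3 : (B:ℝ) ^ δ / δ = (1/δ) * (B:ℝ) ^ δ := by ring
    rw [h3] at h1
    linarith
  have hstep3 : 2 * c * R + 3 ≤ C1 * (1 + 1/δ) * (B:ℝ) ^ δ := by
    calc 2 * c * R + 3 ≤ C1 * (1 + Real.log B) := hstep1
      _ ≤ C1 * ((1 + 1/δ) * (B:ℝ) ^ δ) := mul_le_mul_of_nonneg_left hstep2 hC1pos.le
      _ = C1 * (1 + 1/δ) * (B:ℝ) ^ δ := by ring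
  have hR3 : 0 ≤ 2 * c * R + 3 := by positivity
  have hpow : (2 * c * R + 3) ^ r ≤ (C1 * (1 + 1/δ)) ^ r * ((B:ℝ) ^ δ) ^ r := by
    calc (2 * c * R + 3) ^ r ≤ (C1 * (1 + 1/δ) * (B:ℝ) ^ δ) ^ r :=
          pow_le_pow_left₀ hR3 hstep3 r
      _ = (C1 * (1 + 1/δ)) ^ r * ((B:ℝ) ^ δ) ^ r := mul_pow _ _ _
  have hexp : ((B:ℝ) ^ δ) ^ r ≤ (B:ℝ) ^ ε := by
    rw [← Real.rpow_natCast ((B:ℝ) ^ δ) r, ← Real.rpow_mul hBpos.le]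
    refine Real.rpow_le_rpow_of_exponent_le hB1 ?_
    rw [hδ]
    rw [div_mul_eq_mul_div, div_le_iff₀ (by positivity : (0:ℝ) < (r:ℝ)+1)]
    nlinarith [hε.le]
  calc (Nat.card (torsion K) : ℝ) * (2 * c * R + 3) ^ r
      ≤ (Nat.card (torsion K) : ℝ) * ((C1 * (1 + 1/δ)) ^ r * ((B:ℝ) ^ δ) ^ r) := by
        exact mul_le_mul_of_nonneg_left hpow hw0.le
    _ ≤ (Nat.card (torsion K) : ℝ) * ((C1 * (1 + 1/δ)) ^ r * (B:ℝ) ^ ε) := by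
        refine mul_le_mul_of_nonneg_left ?_ hw0.le
        exact mul_le_mul_of_nonneg_left hexp (by positivity)
    _ = (Nat.card (torsion K) : ℝ) * (C1 * (1 + 1/δ)) ^ r * (B:ℝ) ^ ε := by ring
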